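/- Let σ be a permutation of a finite set of size n and let u_σ ∈ GL(n, K) be the corresponding permutation matrix over a field K. Then d_rank(u_σ, I) ≤ d_Ham(σ, id) ≤ 2·d_rank(u_σ, I), where I is the identity matrix and id the identity permutation. -/

import Mathlib

open Matrix

/-- The permutation matrix of a permutation. -/
def permMat {n : ℕ} (K : Type*) [Zero K] [One K] (σ : Equiv.Perm (Fin n)) :
    Matrix (Fin n) (Fin n) K :=
  fun i j => if i = σ j then 1 else 0

/-- Normalized Hamming distance between permutations. -/
noncomputable def dHam {α : Type*} (σ τ : Equiv.Perm α) : ℝ :=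
  (Nat.card {x : α // σ x ≠ τ x} : ℝ) / (Nat.card α : ℝ)

/-- Normalized rank distance between square matrices. -/
noncomputable def dRank {ι : Type*} [Fintype ι] {K : Type*} [Field K]
    (u v : Matrix ι ι K) : ℝ :=
  ((u - v).rank : ℝ) / (Fintype.card ι : ℝ)

lemma permMat_mulVec {n : ℕ} {K : Type*} [Field K] (σ : Equiv.Perm (Fin n))
    (x : Fin n → K) (i : Fin n) : (permMat K σ *ᵥ x) i = x (σ⁻¹ i) := by
  simp only [mulVec, dotProduct, permMat]
  rw [Finset.sum_eq_single (σ⁻¹ i)]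
  · simp
  · intro b _ hb
    rw [if_neg, zero_mul]
    intro hc
    exact hb (by rw [hc]; simp)
  · simp

lemma permMat_ker_iff {n : ℕ} {K : Type*} [Field K] (σ : Equiv.Perm (Fin n))
    (x : Fin n → K) :
    (permMat K σ - 1).mulVecLin x = 0 ↔ ∀ i, x (σ i) = x i := by
  constructor
  · intro h i
    have := congrFun h (σ i)
    simp only [mulVecLin_apply, sub_mulVec, permMat_mulVec, one_mulVec, Pi.sub_apply,
      Pi.zero_apply, Equiv.Perm.inv_def, Equiv.symm_apply_apply, sub_eq_zero] at this
    exact this.symm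
  · intro h
    funext i
    simp only [mulVecLin_apply, sub_mulVec, permMat_mulVec, one_mulVec, Pi.sub_apply,
      Pi.zero_apply, sub_eq_zero]
    have := h (σ⁻¹ i)
    simpa using this.symm

lemma const_on_cycles {n : ℕ} {K : Type*} [Field K] {σ : Equiv.Perm (Fin n)}
    {x : Fin n → K} (h : ∀ i, x (σ i) = x i) {a b : Fin n}
    (hab : σ.SameCycle a b) : x a = x b := by
  obtain ⟨k, hk⟩ := hab
  rw [← hk]
  have : ∀ m : ℤ, x ((σ ^ m) a) = x a := by
    intro m
    induction m using Int.induction_on with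
    | zero => simp
    | succ k ih =>
        rw [show ((k:ℤ)+1) = 1 + (k:ℤ) by ring, _root_.zpow_one_add,
          Equiv.Perm.mul_apply, h, ih]
    | pred k ih =>
        have h2 : (σ ^ (1 + (-(k:ℤ)-1))) a = σ ((σ ^ (-(k:ℤ)-1)) a) := by
          rw [_root_.zpow_one_add, Equiv.Perm.mul_apply]
        rw [show (-(k:ℤ)) = 1 + (-(k:ℤ)-1) by ring, h2, h] at ih
        exact ih
  exact (this k).symm

open Equiv Finset in
/-- `d_rank(u_σ, I) ≤ d_Ham(σ, id) ≤ 2·d_rank(u_σ, I)`. -/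
theorem dRank_le_dHam_le_two_dRank {n : ℕ} (K : Type*) [Field K]
    (σ : Equiv.Perm (Fin n)) :
    dRank (permMat K σ) 1 ≤ dHam σ 1 ∧ dHam σ 1 ≤ 2 * dRank (permMat K σ) 1 := by
  classical
  set s : Setoid (Fin n) := ⟨σ.SameCycle, Equiv.Perm.SameCycle.equivalence σ⟩ with hs
  set q : Fin n → Quotient s := Quotient.mk s with hq
  have hqsurj : Function.Surjective q := Quotient.mk''_surjective
  have hqeq : ∀ a b : Fin n, q a = q b ↔ σ.SameCycle a b := fun a b => Quotient.eq''
  -- the kernel of A equals the range of precomposition with q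
  set A : Matrix (Fin n) (Fin n) K := permMat K σ - 1 with hA
  have hrange : LinearMap.range (LinearMap.funLeft K K q) = LinearMap.ker A.mulVecLin := by
    ext x
    simp only [LinearMap.mem_range, LinearMap.mem_ker]
    constructor
    · rintro ⟨g, rfl⟩
      rw [permMat_ker_iff]
      intro i
      simp only [LinearMap.funLeft_apply, Function.comp]
      congr 1
      rw [hqeq]
      exact (Equiv.Perm.sameCycle_apply_right.mpr (Equiv.Perm.SameCycle.refl σ i)).symm
    · intro hx
      rw [permMat_ker_iff] at hx
      refine ⟨Quotient.lift x fun a b hab => const_on_cycles hx hab, ?_⟩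
      funext i
      rfl
  -- dimension count
  have hcard : Module.finrank K (LinearMap.ker A.mulVecLin) = Fintype.card (Quotient s) := by
    rw [← hrange, LinearMap.finrank_range_of_inj
      (LinearMap.funLeft_injective_of_surjective K K q hqsurj)]
    simp [Module.finrank_fintype_fun_eq_card]
  set c : ℕ := Fintype.card (Quotient s) with hc
  have hrank : A.rank + c = n := by
    have := LinearMap.finrank_range_add_finrank_ker A.mulVecLin
    rw [hcard] at this
    simpa [Matrix.rank, Module.finrank_fintype_fun_eq_card] using this
  -- counting fixed and moved points
  set F : Finset (Fin n) := univ.filter fun i => σ i = i with hF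
  set M : Finset (Fin n) := univ.filter fun i => σ i ≠ i with hM
  have hFM : F.card + M.card = n := by
    rw [Finset.card_filter_add_card_filter_not]
    simp
  -- q is injective on F
  have hqF : Set.InjOn q F := by
    intro a ha b hb hab
    rw [hqeq] at hab
    obtain ⟨k, hk⟩ := hab
    rw [← hk, Equiv.Perm.zpow_apply_eq_self_of_apply_eq_self (by simpa [hF] using ha) k]
  have hcardF : (F.image q).card = F.card := Finset.card_image_of_injOn hqF
  -- fibers over moved classes have at least 2 elements
  have hfiber : ∀ b ∈ M.image q, 2 ≤ (M.filter fun i => q i = b).card := by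
    intro b hb
    obtain ⟨j, hj, rfl⟩ := Finset.mem_image.mp hb
    have hjm : σ j ≠ j := by simpa [hM] using hj
    have hσjm : σ (σ j) ≠ σ j := fun hc => hjm (σ.injective hc)
    have h1 : j ∈ M.filter fun i => q i = q j := by
      simp [hM, Finset.mem_filter, hjm]
    have h2 : σ j ∈ M.filter fun i => q i = q j := by
      simp only [Finset.mem_filter, hM, Finset.mem_univ, true_and, ne_eq]
      refine ⟨hσjm, ?_⟩
      rw [hqeq]
      exact Equiv.Perm.sameCycle_apply_left.mpr (Equiv.Perm.SameCycle.refl σ j)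
    calc 2 = ({j, σ j} : Finset (Fin n)).card := by
              rw [Finset.card_insert_of_notMem (by simp [Ne.symm hjm]), Finset.card_singleton]
         _ ≤ _ := Finset.card_le_card (by
              intro x hx
              rcases Finset.mem_insert.mp hx with rfl | hx
              · exact h1
              · rw [Finset.mem_singleton] at hx; subst hx; exact h2)
  have hMcount : 2 * (M.image q).card ≤ M.card := by
    rw [Finset.card_eq_sum_card_image q M]
    calc 2 * (M.image q).card = ∑ _b ∈ M.image q, 2 := by rw [Finset.sum_const]; ring
      _ ≤ _ := Finset.sum_le_sum hfiber
  -- c ≤ F.card + (M.image q).card and F.card ≤ c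
  have himgsub : (univ : Finset (Quotient s)) = univ.image q :=
    (Finset.image_univ_of_surjective hqsurj).symm
  have hcle : c ≤ F.card + (M.image q).card := by
    have : (univ : Finset (Fin n)).image q ⊆ F.image q ∪ M.image q := by
      intro b hb
      obtain ⟨j, _, rfl⟩ := Finset.mem_image.mp hb
      by_cases hj : σ j = j
      · exact Finset.mem_union_left _ (Finset.mem_image_of_mem q (by simp [hF, hj]))
      · exact Finset.mem_union_right _ (Finset.mem_image_of_mem q (by simp [hM, hj]))
    calc c = ((univ : Finset (Fin n)).image q).card := by
            rw [hc, ← Finset.card_univ, himgsub]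
      _ ≤ (F.image q ∪ M.image q).card := Finset.card_le_card this
      _ ≤ (F.image q).card + (M.image q).card := Finset.card_union_le _ _
      _ = F.card + (M.image q).card := by rw [hcardF]
  have hfle : F.card ≤ c := by
    calc F.card = (F.image q).card := hcardF.symm
      _ ≤ Fintype.card (Quotient s) := by
            rw [← Finset.card_univ]; exact Finset.card_le_card (Finset.subset_univ _)
  -- key natural-number inequalities
  have key1 : A.rank ≤ M.card := by omega
  have key2 : M.card ≤ 2 * A.rank := by omega
  -- translate to reals
  have hMnat : Nat.card {x : Fin n // σ x ≠ (1 : Equiv.Perm (Fin n)) x} = M.card := by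
    rw [Nat.card_eq_fintype_card, Fintype.card_subtype]
    congr 1
  have hdH : dHam σ 1 = (M.card : ℝ) / (n : ℝ) := by
    rw [dHam, hMnat, Nat.card_eq_fintype_card, Fintype.card_fin]
  have hdR : dRank (permMat K σ) 1 = (A.rank : ℝ) / (n : ℝ) := by
    rw [dRank, Fintype.card_fin, hA]
  rcases Nat.eq_zero_or_pos n with rfl | hn
  · rw [hdH, hdR]
    norm_num
  have hn' : (0:ℝ) < n := by exact_mod_cast hn
  constructor
  · rw [hdH, hdR]
    exact (div_le_div_iff_of_pos_right hn').mpr (by exact_mod_cast key1)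
  · rw [hdH, hdR, ← mul_div_assoc]
    exact (div_le_div_iff_of_pos_right hn').mpr (by exact_mod_cast key2)
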